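/- Let N = q^k·n^2 be an odd perfect number given in Eulerian form. Then q < n·√3. -/

import Mathlib

open ArithmeticFunction Finset
open scoped ArithmeticFunction.sigma

private lemma geom_aux (m i : ℕ) :
    (∑ j ∈ range (i + 1), (m + 1) ^ j) * m + 1 = (m + 1) ^ (i + 1) := by
  induction i with
  | zero => simp
  | succ i ih =>
    rw [Finset.sum_range_succ, add_mul, pow_succ (m + 1) (i + 1)]
    linarith [ih]

private lemma sigma_geom {p : ℕ} (hp : p.Prime) (e : ℕ) :
    (σ 1 (p ^ e)) * (p - 1) + 1 = p ^ (e + 1) := by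
  obtain ⟨m, rfl⟩ : ∃ m, p = m + 1 := ⟨p - 1, (Nat.succ_pred_eq_of_pos hp.pos).symm⟩
  rw [sigma_one_apply_prime_pow hp]
  simpa using geom_aux m e

-- main natural-number lemma
set_option maxHeartbeats 2000000 in
private lemma key_nat (q k n : ℕ) (hq : q.Prime) (hq1 : q % 4 = 1) (hk1 : k % 4 = 1)
    (hgcd : Nat.gcd q n = 1) (hodd : Odd (q ^ k * n ^ 2))
    (hperf : Nat.Perfect (q ^ k * n ^ 2)) : q ^ 2 < 3 * n ^ 2 := by
  have hq5 : 5 ≤ q := by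
    have := hq.two_le
    omega
  have hk : 1 ≤ k := by omega
  have hnpos : 0 < n := by
    rcases Nat.eq_zero_or_pos n with h | h
    · exfalso; subst h; simpa using hperf.2
    · exact h
  have hNpos : 0 < q ^ k * n ^ 2 := hperf.2
  have hnodd : Odd n := by
    have h2 : Odd (n ^ 2) := (Nat.odd_mul.mp hodd).2
    rw [pow_two] at h2
    exact (Nat.odd_mul.mp h2).1
  have hcop : Nat.Coprime (q ^ k) (n ^ 2) := Nat.Coprime.pow k 2 hgcd
  have hσN : σ 1 (q ^ k * n ^ 2) = 2 * (q ^ k * n ^ 2) := by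
    rw [sigma_one_apply]
    exact (Nat.perfect_iff_sum_divisors_eq_two_mul hNpos).mp hperf
  have hmul : σ 1 (q ^ k) * σ 1 (n ^ 2) = 2 * (q ^ k * n ^ 2) := by
    rw [← isMultiplicative_sigma.map_mul_of_coprime hcop, hσN]
  by_contra hcon
  push_neg at hcon  -- hcon : 3 * n ^ 2 ≤ q ^ 2
  rcases eq_or_ne k 1 with rfl | hk5
  · -- k = 1
    rw [pow_one] at hmul
    have hσq : σ 1 q = q + 1 := by
      rw [sigma_one_apply, hq.divisors, Finset.sum_pair hq.one_lt.ne]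
      omega
    obtain ⟨L, h2L⟩ : ∃ L, q + 1 = 2 * L := ⟨(q + 1) / 2, by omega⟩
    have hLpos : 3 ≤ L := by omega
    have hLσ : L * σ 1 (n ^ 2) = q * n ^ 2 := by
      have h1 : 2 * (L * σ 1 (n ^ 2)) = 2 * (q * n ^ 2) := by
        calc 2 * (L * σ 1 (n ^ 2)) = (2 * L) * σ 1 (n ^ 2) := by ring
        _ = (q + 1) * σ 1 (n ^ 2) := by rw [h2L]
        _ = σ 1 q * σ 1 (n ^ 2) := by rw [hσq]
        _ = 2 * (q * n ^ 2) := hmul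
      omega
    have hcopLq : Nat.Coprime L q := by
      refine Nat.coprime_comm.mp (hq.coprime_iff_not_dvd.mpr fun hd => ?_)
      have := Nat.le_of_dvd (by omega) hd
      omega
    have hLn : L ∣ n ^ 2 := hcopLq.dvd_of_dvd_mul_left ⟨σ 1 (n ^ 2), hLσ.symm⟩
    obtain ⟨D, hD⟩ := hLn
    have hDpos : 0 < D := by
      rcases Nat.eq_zero_or_pos D with h | h
      · exfalso; rw [h, mul_zero] at hD; nlinarith [hnpos]
      · exact h
    have hσn2 : σ 1 (n ^ 2) = q * D := by
      have h1 : L * σ 1 (n ^ 2) = L * (q * D) := by rw [hLσ, hD]; ring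
      exact Nat.eq_of_mul_eq_mul_left (by omega) h1
    have hDq : 3 * D < 2 * q := by
      have h1 : (3 * D) * L ≤ q ^ 2 := by
        calc (3 * D) * L = 3 * (L * D) := by ring
        _ = 3 * n ^ 2 := by rw [hD]
        _ ≤ q ^ 2 := hcon
      have h2 : q ^ 2 < (2 * q) * L := by nlinarith [hq5]
      exact Nat.lt_of_mul_lt_mul_right (lt_of_le_of_lt h1 h2)
    -- extract prime power p^e || n^2 with q ∣ σ(p^e)
    have hn2ne : n ^ 2 ≠ 0 := by positivity
    have hfac := isMultiplicative_sigma.multiplicative_factorization (σ 1) hn2ne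
    rw [Finsupp.prod] at hfac
    have hqdvd : q ∣ ∏ p ∈ (n ^ 2).factorization.support, σ 1 (p ^ (n ^ 2).factorization p) := by
      rw [← hfac, hσn2]; exact Dvd.intro _ rfl
    obtain ⟨p, hpmem, hpdvd⟩ := (hq.prime.dvd_finset_prod_iff _).mp hqdvd
    have hpmem' : p ∈ (n ^ 2).primeFactors := by rwa [Nat.support_factorization] at hpmem
    have hp : p.Prime := Nat.prime_of_mem_primeFactors hpmem'
    have hpn2 : p ∣ n ^ 2 := Nat.dvd_of_mem_primeFactors hpmem'
    have hp3 : 3 ≤ p := by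
      have h2 := hp.two_le
      rcases Nat.lt_or_ge p 3 with h | h
      · exfalso
        have hp2 : p = 2 := by omega
        have : (2 : ℕ) ∣ n ^ 2 := hp2 ▸ hpn2
        have hodd2 : Odd (n ^ 2) := (Nat.odd_mul.mp hodd).2
        rw [Nat.odd_iff] at hodd2
        omega
      · exact h
    obtain ⟨m, rfl⟩ : ∃ m, p = m + 3 := ⟨p - 3, by omega⟩
    obtain ⟨e, he⟩ : ∃ e, e = (n ^ 2).factorization (m + 3) := ⟨_, rfl⟩
    rw [← he] at hpdvd
    have hene : e ≠ 0 := he ▸ Finsupp.mem_support_iff.mp hpmem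
    obtain ⟨u, hu⟩ : q ∣ σ 1 ((m + 3) ^ e) := hpdvd
    have hgeom : (q * u) * (m + 2) + 1 = (m + 3) ^ (e + 1) := by
      have h1 := sigma_geom hp e
      rw [hu] at h1
      simpa using h1
    have hu1 : 1 ≤ u := by
      rcases Nat.eq_zero_or_pos u with h | h
      · exfalso
        rw [h, mul_zero, zero_mul, zero_add] at hgeom
        have : (1:ℕ) < (m + 3) ^ (e + 1) := Nat.one_lt_pow (Nat.succ_ne_zero e) (by omega)
        omega
      · exact h
    -- u ∣ D
    have hsplit : n ^ 2 = (m + 3) ^ e * (n ^ 2 / (m + 3) ^ e) := by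
      rw [he]; exact (Nat.ordProj_mul_ordCompl_eq_self (n ^ 2) (m + 3)).symm
    have hcopP : Nat.Coprime ((m + 3) ^ e) (n ^ 2 / (m + 3) ^ e) := by
      rw [he]; exact Nat.Coprime.pow_left _ (Nat.coprime_ordCompl hp hn2ne)
    have hσsplit : σ 1 (n ^ 2) = σ 1 ((m + 3) ^ e) * σ 1 (n ^ 2 / (m + 3) ^ e) := by
      conv_lhs => rw [hsplit]
      exact isMultiplicative_sigma.map_mul_of_coprime hcopP
    have hDu : D = u * σ 1 (n ^ 2 / (m + 3) ^ e) := by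
      have h1 : q * D = q * (u * σ 1 (n ^ 2 / (m + 3) ^ e)) := by
        rw [← hσn2, hσsplit, hu]; ring
      exact Nat.eq_of_mul_eq_mul_left hq.pos h1
    have huD : u ∣ D := ⟨_, hDu⟩
    clear hfac hqdvd hσsplit hsplit hcopP hσN hmul hσq hLσ hσn2 hDu hu hpmem hpmem' hpn2 hperf hodd hcop
    have hpu : ¬ (m + 3) ∣ u := by
      intro hd
      have h2 : (m + 3) ∣ (q * u) * (m + 2) := ((hd.mul_left q).mul_right _)
      have h3 : (m + 3) ∣ (m + 3) ^ (e + 1) := dvd_pow_self _ (Nat.succ_ne_zero e)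
      rw [← hgeom] at h3
      have h4 := (Nat.dvd_add_right h2).mp h3
      have := Nat.le_of_dvd one_pos h4
      omega
    -- split exponent
    have hL0 : L ≠ 0 := by omega
    have hD0 : D ≠ 0 := by omega
    obtain ⟨s, hs⟩ : ∃ s, s = L.factorization (m + 3) := ⟨_, rfl⟩
    obtain ⟨t, ht⟩ : ∃ t, t = D.factorization (m + 3) := ⟨_, rfl⟩
    have hst : e = s + t := by
      rw [he, hs, ht, hD, Nat.factorization_mul hL0 hD0]
      simp
    have hpt : (m + 3) ^ t ∣ D := by rw [ht]; exact Nat.ordProj_dvd D (m + 3)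
    rcases Nat.eq_zero_or_pos s with hs0 | hs1
    · -- case p does not divide L
      have hpeD : (m + 3) ^ e ∣ D := by
        rw [hst, hs0, zero_add]; exact hpt
      have hDe : (m + 3) ^ e ≤ D := Nat.le_of_dvd hDpos hpeD
      have hkey : 2 * (q * u) * (m + 3) < 3 * (m + 3) ^ e * (m + 3) := by
        have h1 : 3 * (m + 3) ^ e * (m + 3) = 3 * ((q * u) * (m + 2) + 1) := by
          rw [hgeom]; ring
        rw [h1]
        nlinarith [Nat.zero_le (q*u*m)]
      have h2 : 2 * (q * u) < 3 * (m + 3) ^ e := Nat.lt_of_mul_lt_mul_right hkey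
      have h3 : 2 * q ≤ 2 * (q * u) := by nlinarith [hu1, hq5]
      omega
    · -- case p divides L
      have hpsL : (m + 3) ^ s ∣ L := by rw [hs]; exact Nat.ordProj_dvd L (m + 3)
      have hpsq1 : (m + 3) ^ s ∣ q + 1 := by
        rw [h2L]; exact hpsL.mul_left 2
      -- W : minimal positive solution of (m+2)*W ≡ 1 mod (m+3)^s
      have hWdvd : (m + 2) ∣ (m + 1) * (m + 3) ^ s + 1 := by
        have h1 : (1 : ℕ) ≡ (m + 3) [MOD (m + 2)] :=
          (Nat.modEq_iff_dvd' (by omega)).mpr (by simpa using dvd_refl (m + 2))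
        have h2 : ((m + 1) * 1 + 1 : ℕ) ≡ (m + 1) * (m + 3) ^ s + 1 [MOD (m + 2)] := by
          have h2' := ((h1.pow s).mul_left (m + 1)).add_right 1
          rwa [one_pow] at h2'
        have h3 : (m + 2) ∣ (m + 1) * 1 + 1 := ⟨1, by ring⟩
        exact (Nat.modEq_zero_iff_dvd).mp ((h2.symm.trans (Nat.modEq_zero_iff_dvd.mpr h3)))
      obtain ⟨W, hW⟩ := hWdvd
      have hx : m + 3 ≤ (m + 3) ^ s := Nat.le_self_pow (by omega) _
      have hWpos : 1 ≤ W := by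
        rcases Nat.eq_zero_or_pos W with h | h
        · exfalso; rw [h, mul_zero] at hW; omega
        · exact h
      have hWlt : W < (m + 3) ^ s := by
        have h1 : (m + 2) * W < (m + 2) * (m + 3) ^ s := by
          rw [← hW]; nlinarith [hx]
        exact Nat.lt_of_mul_lt_mul_left h1
      -- congruences
      set X := (m + 3) ^ s with hX
      have hXu : X ∣ u * (m + 2) - 1 := by
        have hA : X ∣ (q * u) * (m + 2) + 1 := by
          rw [hgeom]; exact pow_dvd_pow _ (by omega)
        have hB : X ∣ u * (m + 2) * (q + 1) := Dvd.dvd.mul_left hpsq1 _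
        have hBeq : u * (m + 2) * (q + 1) = (q * u) * (m + 2) + u * (m + 2) := by ring
        rw [hBeq] at hB
        have := Nat.dvd_sub hB hA
        have heq : (q * u) * (m + 2) + u * (m + 2) - ((q * u) * (m + 2) + 1) = u * (m + 2) - 1 := by
          omega
        rwa [heq] at this
      have hXW : X ∣ W * (m + 2) - 1 := by
        refine ⟨m + 1, ?_⟩
        have h0 : W * (m + 2) = X * (m + 1) + 1 := by
          rw [mul_comm W (m + 2), ← hW]; ring
        omega
      have hWu : W ≤ u := by
        by_contra hlt
        push_neg at hlt
        have hd : X ∣ (W * (m + 2) - 1) - (u * (m + 2) - 1) := Nat.dvd_sub hXW hXu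
        have heq : (W * (m + 2) - 1) - (u * (m + 2) - 1) = (W - u) * (m + 2) := by
          have h1 : 1 ≤ u * (m + 2) := by nlinarith only [hu1]
          rw [Nat.sub_sub_sub_cancel_right h1, ← Nat.sub_mul]
        rw [heq] at hd
        have hcop3 : Nat.Coprime X (m + 2) := by
          refine Nat.Coprime.pow_left s ?_
          have h : (m + 3).gcd (m + 2) ∣ m + 3 - (m + 2) :=
            Nat.dvd_sub (Nat.gcd_dvd_left _ _) (Nat.gcd_dvd_right _ _)
          simp only [Nat.add_sub_add_left] at h
          exact Nat.dvd_one.mp (by simpa using h)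
        have hd2 : X ∣ W - u := hcop3.dvd_of_dvd_mul_right hd
        have h5 : X ≤ W - u := Nat.le_of_dvd (by omega) hd2
        omega
      -- key polynomial inequality
      have hkey : 2 * ((m + 3) * X) ≤ 3 * (u * u) * (m + 2) := by
        have h9 : 2 * ((m + 3) * X) * (m + 2) ≤ 3 * ((m + 1) * X + 1) ^ 2 := by
          nlinarith [hx, Nat.zero_le (m*X), Nat.zero_le (m*m*X), mul_le_mul_of_nonneg_right hx (Nat.zero_le X)]
        have h10 : 3 * ((m + 1) * X + 1) ^ 2 = (3 * (W * W) * (m + 2)) * (m + 2) := by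
          rw [hW]; ring
        have h11 : 2 * ((m + 3) * X) * (m + 2) ≤ (3 * (W * W) * (m + 2)) * (m + 2) := by
          rw [← h10]; exact h9
        have h12 : 2 * ((m + 3) * X) ≤ 3 * (W * W) * (m + 2) := Nat.le_of_mul_le_mul_right h11 (by omega)
        have h13 : 3 * (W * W) * (m + 2) ≤ 3 * (u * u) * (m + 2) := by
          have := Nat.mul_le_mul hWu hWu
          nlinarith [this]
        omega
      have hept : (m + 3) ^ (e + 1) = ((m + 3) * X) * (m + 3) ^ t := by
        rw [hX, hst]
        ring
      have hfin : 2 * q * (u * (m + 2)) < 3 * (u * (m + 3) ^ t) * (u * (m + 2)) := by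
        have c1 : 2 * q * (u * (m + 2)) < 2 * ((q * u) * (m + 2) + 1) := by nlinarith
        have c2 : 2 * ((q * u) * (m + 2) + 1) = 2 * ((m + 3) * X) * (m + 3) ^ t := by
          rw [hgeom, hept]; ring
        have c3 : 2 * ((m + 3) * X) * (m + 3) ^ t ≤ (3 * (u * u) * (m + 2)) * (m + 3) ^ t :=
          Nat.mul_le_mul_right _ hkey
        have c4 : (3 * (u * u) * (m + 2)) * (m + 3) ^ t = 3 * (u * (m + 3) ^ t) * (u * (m + 2)) := by
          ring
        omega
      have h2q : 2 * q < 3 * (u * (m + 3) ^ t) := Nat.lt_of_mul_lt_mul_right hfin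
      have hcopupt : Nat.Coprime u ((m + 3) ^ t) :=
        Nat.Coprime.pow_right t (Nat.coprime_comm.mp (hp.coprime_iff_not_dvd.mpr hpu))
      have hupt : u * (m + 3) ^ t ∣ D := hcopupt.mul_dvd_of_dvd_of_dvd huD hpt
      have hle : u * (m + 3) ^ t ≤ D := Nat.le_of_dvd hDpos hupt
      omega
  · -- k ≥ 5
    have hk5' : 5 ≤ k := by omega
    have hdvd : σ 1 (q ^ k) ∣ q ^ k * (2 * n ^ 2) := ⟨σ 1 (n ^ 2), by rw [hmul]; ring⟩
    have hnd : ¬ q ∣ σ 1 (q ^ k) := by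
      intro hdq
      have hgeom := sigma_geom hq k
      have h2 : q ∣ σ 1 (q ^ k) * (q - 1) := hdq.mul_right _
      have h3 : q ∣ q ^ (k + 1) := dvd_pow_self q (Nat.succ_ne_zero k)
      rw [← hgeom] at h3
      have h4 := (Nat.dvd_add_right h2).mp h3
      have := Nat.le_of_dvd one_pos h4
      omega
    have hcop2 : Nat.Coprime (σ 1 (q ^ k)) (q ^ k) :=
      Nat.Coprime.pow_right k (Nat.coprime_comm.mp (hq.coprime_iff_not_dvd.mpr hnd))
    have hσdvd2 : σ 1 (q ^ k) ∣ 2 * n ^ 2 := hcop2.dvd_of_dvd_mul_left hdvd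
    have hσle : σ 1 (q ^ k) ≤ 2 * n ^ 2 := Nat.le_of_dvd (by positivity) hσdvd2
    have hgeom := sigma_geom hq k
    have hq6 : q ^ 6 ≤ q ^ (k + 1) := Nat.pow_le_pow_right (by omega) (by omega)
    rw [← hgeom] at hq6
    have h1 : σ 1 (q ^ k) * (q - 1) + 1 ≤ (2 * n ^ 2) * q := by
      have : σ 1 (q ^ k) * (q - 1) + 1 ≤ (2 * n ^ 2) * (q - 1) + 1 :=
        by exact Nat.add_le_add_right (Nat.mul_le_mul_right _ hσle) 1
      have h2 : (2 * n ^ 2) * (q - 1) + 1 ≤ (2 * n ^ 2) * q := by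
        have hn2 : 1 ≤ 2 * n ^ 2 := by nlinarith [hnpos]
        have : (2 * n ^ 2) * (q - 1) + (2 * n ^ 2) ≤ (2 * n ^ 2) * q := by
          rw [← Nat.mul_succ]
          exact Nat.mul_le_mul_left _ (by omega)
        omega
      omega
    have hq6' : q ^ 6 ≤ 2 * n ^ 2 * q := le_trans hq6 h1
    -- combine with 3 * n^2 ≤ q^2
    have hA : 125 ≤ q ^ 3 := by
      calc (125 : ℕ) = 5 ^ 3 := by norm_num
      _ ≤ q ^ 3 := Nat.pow_le_pow_left hq5 3
    have hq6eq : q ^ 6 = q ^ 3 * q ^ 3 := by ring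
    have hq2 : q ^ 2 * q = q ^ 3 := by ring
    nlinarith [hq6', hcon, hA, pow_pos (show 0 < q by omega) 3, sq_nonneg n]

/-- For an odd perfect number `N = q^k * n^2` in Eulerian form, `q < n * √3`. -/
theorem stmt_19 (q k n : ℕ) (hq : q.Prime) (hq1 : q % 4 = 1) (hk1 : k % 4 = 1)
    (hgcd : Nat.gcd q n = 1) (hodd : Odd (q ^ k * n ^ 2))
    (hperf : Nat.Perfect (q ^ k * n ^ 2)) :
    (q : ℝ) < (n : ℝ) * Real.sqrt 3 := by
  have hkey := key_nat q k n hq hq1 hk1 hgcd hodd hperf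
  have h1 : (q : ℝ) ^ 2 < 3 * (n : ℝ) ^ 2 := by exact_mod_cast hkey
  have h3 : Real.sqrt 3 ^ 2 = 3 := Real.sq_sqrt (by norm_num)
  have : (q : ℝ) ^ 2 < ((n : ℝ) * Real.sqrt 3) ^ 2 := by
    rw [mul_pow, h3]; linarith
  exact lt_of_pow_lt_pow_left₀ 2 (by positivity) this
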